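/- arXiv:2605.26732 — 2 statements merged into one kernel-verified Lean document; each statement's English description precedes it below -/
import Mathlib

section
/- Let S ⊆ ℝⁿ be measurable and A, Â : S → ℝ≥0, τ, τ̂ : S → ℝ measurable with A(r) ≤ A_max and Â(r) ≤ Â_max for all r ∈ S, and suppose A − Â and Δτ := τ̂ − τ are square-integrable on S. With u(r) = A(r)exp(iντ(r)) and û(r) = Â(r)exp(iντ̂(r)) for ν ≥ 0, one has ∫_S |û − u|² ≤ ∫_S (Â − A)² + ν²·A_max·Â_max·∫_S (τ̂ − τ)². -/
open MeasureTheory Complex Real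

lemma abs_sq_key (A B a b : ℝ) :
    (‖(B : ℂ) * Complex.exp (Complex.I * b) -
      (A : ℂ) * Complex.exp (Complex.I * a)‖) ^ 2
    = (B - A) ^ 2 + 2 * A * B * (1 - Real.cos (b - a)) := by
  rw [Complex.sq_norm]
  simp only [Complex.normSq_apply, Complex.sub_re, Complex.sub_im, Complex.mul_re,
    Complex.mul_im, Complex.I_mul_re]
  rw [show Complex.I * (b : ℂ) = (b : ℂ) * Complex.I by ring,
    show Complex.I * (a : ℂ) = (a : ℂ) * Complex.I by ring,
    Complex.exp_mul_I, Complex.exp_mul_I]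
  simp [Complex.cos_ofReal_re, Complex.sin_ofReal_re, Real.cos_sub]
  linear_combination (B^2) * Real.sin_sq_add_cos_sq b + (A^2) * Real.sin_sq_add_cos_sq a

theorem frequency_sensitive_upper_bound
    {n : ℕ} (S : Set (Fin n → ℝ)) (hS : MeasurableSet S)
    (A Ahat τ τhat : (Fin n → ℝ) → ℝ) (ν : ℝ) (hν : 0 ≤ ν)
    (Amax Ahatmax : ℝ)
    (hA0 : ∀ r, 0 ≤ A r) (hAhat0 : ∀ r, 0 ≤ Ahat r)
    (hAub : ∀ r ∈ S, A r ≤ Amax) (hAhatub : ∀ r ∈ S, Ahat r ≤ Ahatmax)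
    (hAm : Measurable A) (hAhatm : Measurable Ahat)
    (hτm : Measurable τ) (hτhatm : Measurable τhat)
    (hdiff2 : Integrable (fun r => (Ahat r - A r) ^ 2) (volume.restrict S))
    (hΔτ2 : Integrable (fun r => (τhat r - τ r) ^ 2) (volume.restrict S)) :
    ∫ r in S, (‖(Ahat r : ℂ) * Complex.exp (Complex.I * (ν * τhat r)) -
        (A r : ℂ) * Complex.exp (Complex.I * (ν * τ r))‖) ^ 2
      ≤ (∫ r in S, (Ahat r - A r) ^ 2) +
        ν ^ 2 * Amax * Ahatmax * ∫ r in S, (τhat r - τ r) ^ 2 := by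
  set g : (Fin n → ℝ) → ℝ :=
    fun r => (Ahat r - A r) ^ 2 + ν ^ 2 * Amax * Ahatmax * (τhat r - τ r) ^ 2 with hg
  have hgint : Integrable g (volume.restrict S) := hdiff2.add (hΔτ2.const_mul _)
  have hpt : ∀ r ∈ S,
      (‖(Ahat r : ℂ) * Complex.exp (Complex.I * (ν * τhat r)) -
        (A r : ℂ) * Complex.exp (Complex.I * (ν * τ r))‖) ^ 2 ≤ g r := by
    intro r hr
    rw [show ((ν : ℂ) * (τhat r : ℂ)) = ((ν * τhat r : ℝ) : ℂ) by push_cast; ring,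
        show ((ν : ℂ) * (τ r : ℂ)) = ((ν * τ r : ℝ) : ℂ) by push_cast; ring,
        abs_sq_key]
    have hcos : 1 - Real.cos (ν * τhat r - ν * τ r) ≤ (ν * τhat r - ν * τ r) ^ 2 / 2 := by
      have := Real.one_sub_sq_div_two_le_cos (x := ν * τhat r - ν * τ r)
      linarith
    have h1 : 0 ≤ 1 - Real.cos (ν * τhat r - ν * τ r) := by
      have := Real.cos_le_one (ν * τhat r - ν * τ r); linarith
    have hAB : A r * Ahat r ≤ Amax * Ahatmax :=
      mul_le_mul (hAub r hr) (hAhatub r hr) (hAhat0 r) ((hA0 r).trans (hAub r hr))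
    have h2 : 2 * A r * Ahat r * (1 - Real.cos (ν * τhat r - ν * τ r))
        ≤ ν ^ 2 * Amax * Ahatmax * (τhat r - τ r) ^ 2 := by
      calc 2 * A r * Ahat r * (1 - Real.cos (ν * τhat r - ν * τ r))
          ≤ 2 * (Amax * Ahatmax) * ((ν * τhat r - ν * τ r) ^ 2 / 2) := by
            have hAmax : (0:ℝ) ≤ Amax := (hA0 r).trans (hAub r hr)
            have hAhatmax : (0:ℝ) ≤ Ahatmax := (hAhat0 r).trans (hAhatub r hr)
            apply mul_le_mul _ hcos h1
            · nlinarith [mul_nonneg (hA0 r) (hAhat0 r)]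
            · nlinarith
        _ = ν ^ 2 * Amax * Ahatmax * (τhat r - τ r) ^ 2 := by ring
    simp only [hg]; linarith
  have hmono : ∫ r in S, (‖(Ahat r : ℂ) * Complex.exp (Complex.I * (ν * τhat r)) -
        (A r : ℂ) * Complex.exp (Complex.I * (ν * τ r))‖) ^ 2 ≤ ∫ r in S, g r := by
    apply integral_mono_of_nonneg
    · filter_upwards with r; positivity
    · exact hgint
    · exact (ae_restrict_iff' hS).2 (Filter.Eventually.of_forall hpt)
  calc _ ≤ ∫ r in S, g r := hmono
    _ = (∫ r in S, (Ahat r - A r) ^ 2) +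
        ν ^ 2 * Amax * Ahatmax * ∫ r in S, (τhat r - τ r) ^ 2 := by
      rw [hg, integral_add hdiff2 (hΔτ2.const_mul _), integral_const_mul]
end

section
/- Let S ⊆ ℝⁿ be measurable, A, Â : S → ℝ≥0 square-integrable, τ, τ̂ : S → ℝ measurable, and ν ∈ ℝ. With u(r) = A(r)e^{iντ(r)} and û(r) = Â(r)e^{iντ̂(r)}, one has the Cauchy–Schwarz-type bound: ∫_S |û − u|² ≤ ∫_S (Â − A)² + ν²·(∫_S A²·(τ̂ − τ)²)^{1/2}·(∫_S Â²·(τ̂ − τ)²)^{1/2}, provided A(τ̂−τ) and Â(τ̂−τ) are square-integrable. -/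
open MeasureTheory Complex Real

lemma point_bound (A Ahat a b : ℝ) (hA : 0 ≤ A) (hAh : 0 ≤ Ahat) :
    ‖(Ahat : ℂ) * Complex.exp (Complex.I * b) -
        (A : ℂ) * Complex.exp (Complex.I * a)‖ ^ 2
      ≤ (Ahat - A) ^ 2 + A * Ahat * (b - a) ^ 2 := by
  rw [Complex.sq_norm]
  rw [mul_comm Complex.I, mul_comm Complex.I, Complex.exp_mul_I, Complex.exp_mul_I]
  simp only [Complex.normSq_apply, Complex.sub_re, Complex.sub_im, Complex.add_re,
    Complex.add_im, Complex.mul_re, Complex.mul_im, Complex.cos_ofReal_re, Complex.sin_ofReal_re,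
    Complex.cos_ofReal_im, Complex.sin_ofReal_im, Complex.ofReal_re, Complex.ofReal_im,
    Complex.I_re, Complex.I_im]
  ring_nf
  nlinarith [mul_nonneg hA hAh, Real.sin_sq_add_cos_sq a, Real.sin_sq_add_cos_sq b,
    Real.one_sub_sq_div_two_le_cos (x := b - a), Real.cos_sub b a, sq_nonneg (b - a)]

lemma cs_integral {α : Type*} [MeasurableSpace α] (μ : Measure α) (f g : α → ℝ)
    (hf0 : ∀ x, 0 ≤ f x) (hg0 : ∀ x, 0 ≤ g x)
    (hfm : AEStronglyMeasurable f μ) (hgm : AEStronglyMeasurable g μ)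
    (hf : Integrable (fun x => f x ^ 2) μ) (hg : Integrable (fun x => g x ^ 2) μ) :
    ∫ x, f x * g x ∂μ ≤ Real.sqrt (∫ x, f x ^ 2 ∂μ) * Real.sqrt (∫ x, g x ^ 2 ∂μ) := by
  have hfg : Integrable (fun x => f x * g x) μ := by
    refine (hf.add hg).mono' (hfm.mul hgm) (Filter.Eventually.of_forall fun x => ?_)
    rw [Real.norm_eq_abs, _root_.abs_of_nonneg (mul_nonneg (hf0 x) (hg0 x))]
    show f x * g x ≤ f x ^ 2 + g x ^ 2
    nlinarith [sq_nonneg (f x - g x)]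
  set a := ∫ x, f x ^ 2 ∂μ with ha_def
  set b := ∫ x, g x ^ 2 ∂μ with hb_def
  have ha : 0 ≤ a := integral_nonneg fun x => sq_nonneg _
  have hb : 0 ≤ b := integral_nonneg fun x => sq_nonneg _
  set s := Real.sqrt a with hs_def
  set u := Real.sqrt b with hu_def
  have hs2 : s ^ 2 = a := Real.sq_sqrt ha
  have hu2 : u ^ 2 = b := Real.sq_sqrt hb
  have key : 0 ≤ ∫ x, (u * f x - s * g x) ^ 2 ∂μ := integral_nonneg fun x => sq_nonneg _
  have I1 : Integrable (fun x => u ^ 2 * f x ^ 2 - 2 * (u * s) * (f x * g x)) μ :=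
    (hf.const_mul _).sub (hfg.const_mul _)
  have expand : ∫ x, (u * f x - s * g x) ^ 2 ∂μ
      = u ^ 2 * a - 2 * (u * s) * ∫ x, f x * g x ∂μ + s ^ 2 * b := by
    have h1 : ∀ x, (u * f x - s * g x) ^ 2
        = u ^ 2 * f x ^ 2 - 2 * (u * s) * (f x * g x) + s ^ 2 * g x ^ 2 := fun x => by ring
    simp_rw [h1]
    rw [integral_add I1 (hg.const_mul _),
      integral_sub (hf.const_mul _) (hfg.const_mul _), integral_const_mul, integral_const_mul, integral_const_mul]
  rw [expand] at key
  rcases eq_or_lt_of_le (mul_nonneg (Real.sqrt_nonneg a) (Real.sqrt_nonneg b)) with h | h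
  · rcases mul_eq_zero.mp h.symm with hz | hz
    · have ha0 : a = 0 := by
        by_contra hne
        exact absurd hz (Real.sqrt_ne_zero'.mpr (lt_of_le_of_ne ha (Ne.symm hne)))
      have hf0' : (fun x => f x ^ 2) =ᵐ[μ] 0 :=
        (integral_eq_zero_iff_of_nonneg (fun x => sq_nonneg (f x)) hf).mp (by rw [← ha_def]; exact ha0)
      have hz2 : (fun x => f x * g x) =ᵐ[μ] 0 := by
        filter_upwards [hf0'] with x hx
        simp only [Pi.zero_apply] at hx ⊢
        have : f x = 0 := pow_eq_zero_iff (n := 2) (by norm_num) |>.mp hx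
        simp [this]
      have : ∫ x, f x * g x ∂μ = 0 := by rw [integral_congr_ae hz2]; simp
      rw [this]
      exact mul_nonneg (Real.sqrt_nonneg a) (Real.sqrt_nonneg b)
    · have hb0 : b = 0 := by
        by_contra hne
        exact absurd hz (Real.sqrt_ne_zero'.mpr (lt_of_le_of_ne hb (Ne.symm hne)))
      have hg0' : (fun x => g x ^ 2) =ᵐ[μ] 0 :=
        (integral_eq_zero_iff_of_nonneg (fun x => sq_nonneg (g x)) hg).mp (by rw [← hb_def]; exact hb0)
      have hz2 : (fun x => f x * g x) =ᵐ[μ] 0 := by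
        filter_upwards [hg0'] with x hx
        simp only [Pi.zero_apply] at hx ⊢
        have : g x = 0 := pow_eq_zero_iff (n := 2) (by norm_num) |>.mp hx
        simp [this]
      have : ∫ x, f x * g x ∂μ = 0 := by rw [integral_congr_ae hz2]; simp
      rw [this]
      exact mul_nonneg (Real.sqrt_nonneg a) (Real.sqrt_nonneg b)
  · nlinarith [key, h]

theorem cauchy_schwarz_frequency_bound
    {n : ℕ} (S : Set (Fin n → ℝ)) (hS : MeasurableSet S)
    (A Ahat τ τhat : (Fin n → ℝ) → ℝ) (ν : ℝ)
    (hA0 : ∀ r, 0 ≤ A r) (hAhat0 : ∀ r, 0 ≤ Ahat r)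
    (hAm : Measurable A) (hAhatm : Measurable Ahat)
    (hτm : Measurable τ) (hτhatm : Measurable τhat)
    (hA2 : Integrable (fun r => A r ^ 2) (volume.restrict S))
    (hAhat2 : Integrable (fun r => Ahat r ^ 2) (volume.restrict S))
    (hAΔ2 : Integrable (fun r => A r ^ 2 * (τhat r - τ r) ^ 2) (volume.restrict S))
    (hAhatΔ2 : Integrable (fun r => Ahat r ^ 2 * (τhat r - τ r) ^ 2) (volume.restrict S)) :
    ∫ r in S, (‖(Ahat r : ℂ) * Complex.exp (Complex.I * (ν * τhat r)) -
        (A r : ℂ) * Complex.exp (Complex.I * (ν * τ r))‖) ^ 2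
      ≤ (∫ r in S, (Ahat r - A r) ^ 2) +
        ν ^ 2 * Real.sqrt (∫ r in S, A r ^ 2 * (τhat r - τ r) ^ 2) *
          Real.sqrt (∫ r in S, Ahat r ^ 2 * (τhat r - τ r) ^ 2) := by
  set μ := volume.restrict S with hμ
  set f : (Fin n → ℝ) → ℝ := fun r => A r * |τhat r - τ r| with hf_def
  set g : (Fin n → ℝ) → ℝ := fun r => Ahat r * |τhat r - τ r| with hg_def
  have hfm : Measurable f := hAm.mul (hτhatm.sub hτm).abs
  have hgm : Measurable g := hAhatm.mul (hτhatm.sub hτm).abs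
  have hf2 : Integrable (fun r => f r ^ 2) μ := by
    simpa only [hf_def, mul_pow, _root_.sq_abs] using hAΔ2
  have hg2 : Integrable (fun r => g r ^ 2) μ := by
    simpa only [hg_def, mul_pow, _root_.sq_abs] using hAhatΔ2
  have hf0 : ∀ r, 0 ≤ f r := fun r => mul_nonneg (hA0 r) (abs_nonneg _)
  have hg0 : ∀ r, 0 ≤ g r := fun r => mul_nonneg (hAhat0 r) (abs_nonneg _)
  have hfg : Integrable (fun r => f r * g r) μ := by
    refine (hf2.add hg2).mono' (hfm.mul hgm).aestronglyMeasurable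
      (Filter.Eventually.of_forall fun r => ?_)
    rw [Real.norm_eq_abs, _root_.abs_of_nonneg (mul_nonneg (hf0 r) (hg0 r))]
    show f r * g r ≤ f r ^ 2 + g r ^ 2
    nlinarith [sq_nonneg (f r - g r)]
  have hmul : Integrable (fun r => Ahat r * A r) μ := by
    refine (hAhat2.add hA2).mono' (hAhatm.mul hAm).aestronglyMeasurable
      (Filter.Eventually.of_forall fun r => ?_)
    rw [Real.norm_eq_abs, _root_.abs_of_nonneg (mul_nonneg (hAhat0 r) (hA0 r))]
    show Ahat r * A r ≤ Ahat r ^ 2 + A r ^ 2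
    nlinarith [sq_nonneg (Ahat r - A r)]
  have hsubInt : Integrable (fun r => (Ahat r - A r) ^ 2) μ := by
    have hident : (fun r => (Ahat r - A r) ^ 2)
        = fun r => Ahat r ^ 2 - 2 * (Ahat r * A r) + A r ^ 2 := funext fun r => by ring
    rw [hident]
    exact (hAhat2.sub (hmul.const_mul 2)).add hA2
  have hbound : Integrable (fun r => (Ahat r - A r) ^ 2 + ν ^ 2 * (f r * g r)) μ :=
    hsubInt.add (hfg.const_mul _)
  have hpt : ∀ r, (‖(Ahat r : ℂ) * Complex.exp (Complex.I * (ν * τhat r)) -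
      (A r : ℂ) * Complex.exp (Complex.I * (ν * τ r))‖) ^ 2
      ≤ (Ahat r - A r) ^ 2 + ν ^ 2 * (f r * g r) := by
    intro r
    have h1 := point_bound (A r) (Ahat r) (ν * τ r) (ν * τhat r) (hA0 r) (hAhat0 r)
    have heq : A r * Ahat r * (ν * τhat r - ν * τ r) ^ 2 = ν ^ 2 * (f r * g r) := by
      rw [hf_def, hg_def]
      rw [show (ν * τhat r - ν * τ r) ^ 2
        = ν ^ 2 * ((τhat r - τ r) * (τhat r - τ r)) by ring,
        ← abs_mul_abs_self (τhat r - τ r)]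
      ring
    rw [heq] at h1
    convert h1 using 5 <;> push_cast <;> ring
  have hLm : AEStronglyMeasurable (fun r =>
      (‖(Ahat r : ℂ) * Complex.exp (Complex.I * (ν * τhat r)) -
      (A r : ℂ) * Complex.exp (Complex.I * (ν * τ r))‖) ^ 2) μ := by
    have m1 : Measurable fun r => (Ahat r : ℂ) * Complex.exp (Complex.I * (ν * τhat r)) :=
      (Complex.measurable_ofReal.comp hAhatm).mul
        (Complex.continuous_exp.measurable.comp (measurable_const.mul
          (measurable_const.mul (Complex.measurable_ofReal.comp hτhatm))))
    have m2 : Measurable fun r => (A r : ℂ) * Complex.exp (Complex.I * (ν * τ r)) :=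
      (Complex.measurable_ofReal.comp hAm).mul
        (Complex.continuous_exp.measurable.comp (measurable_const.mul
          (measurable_const.mul (Complex.measurable_ofReal.comp hτm))))
    exact ((continuous_norm.measurable.comp (m1.sub m2)).pow_const 2).aestronglyMeasurable
  have hLint : Integrable (fun r =>
      (‖(Ahat r : ℂ) * Complex.exp (Complex.I * (ν * τhat r)) -
      (A r : ℂ) * Complex.exp (Complex.I * (ν * τ r))‖) ^ 2) μ := by
    refine hbound.mono' hLm (Filter.Eventually.of_forall fun r => ?_)
    rw [Real.norm_eq_abs, _root_.abs_of_nonneg (by positivity)]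
    exact hpt r
  calc ∫ r, (‖(Ahat r : ℂ) * Complex.exp (Complex.I * (ν * τhat r)) -
          (A r : ℂ) * Complex.exp (Complex.I * (ν * τ r))‖) ^ 2 ∂μ
      ≤ ∫ r, ((Ahat r - A r) ^ 2 + ν ^ 2 * (f r * g r)) ∂μ :=
        integral_mono hLint hbound hpt
    _ = (∫ r, (Ahat r - A r) ^ 2 ∂μ) + ν ^ 2 * ∫ r, f r * g r ∂μ := by
        rw [integral_add hsubInt (hfg.const_mul _), integral_const_mul]
    _ ≤ (∫ r, (Ahat r - A r) ^ 2 ∂μ) +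
          ν ^ 2 * (Real.sqrt (∫ r, f r ^ 2 ∂μ) * Real.sqrt (∫ r, g r ^ 2 ∂μ)) := by
        gcongr
        exact cs_integral μ f g hf0 hg0 hfm.aestronglyMeasurable hgm.aestronglyMeasurable hf2 hg2
    _ = (∫ r, (Ahat r - A r) ^ 2 ∂μ) +
          ν ^ 2 * Real.sqrt (∫ r in S, A r ^ 2 * (τhat r - τ r) ^ 2) *
          Real.sqrt (∫ r in S, Ahat r ^ 2 * (τhat r - τ r) ^ 2) := by
        have e1 : (fun r => f r ^ 2) = fun r => A r ^ 2 * (τhat r - τ r) ^ 2 :=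
          funext fun r => by rw [hf_def]; simp [mul_pow, _root_.sq_abs]
        have e2 : (fun r => g r ^ 2) = fun r => Ahat r ^ 2 * (τhat r - τ r) ^ 2 :=
          funext fun r => by rw [hg_def]; simp [mul_pow, _root_.sq_abs]
        rw [e1, e2, mul_assoc]
end
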